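/- Let p ≥ 3 be a prime, k₁, k₂ ≥ 0.4(p-1) integers with k₁ + k₂ < p-1, and I = {n mod p : -k₁ ≤ n ≤ k₂}. Define A = {x ∈ I \ {0} : 2x ∈ I \ {0}} and B = {1, 2} ⊆ 𝔽_p. Then I \ {0} = A·B and |A| ≥ (k₁+k₂)/2 ≥ 0.4(p-1). -/
import Mathlib

open Finset Pointwise

private lemma int_key (q k₁ k₂ n : ℤ) (hq3 : 3 ≤ q) (hqodd : Odd q)
    (h5a : 2 * (q - 1) ≤ 5 * k₁) (h5b : 2 * (q - 1) ≤ 5 * k₂)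
    (hk : k₁ + k₂ < q - 1)
    (hn1 : -k₁ ≤ n) (hn2 : n ≤ k₂) :
    (∃ m, -k₁ ≤ m ∧ m ≤ k₂ ∧ (m = 2*n ∨ m = 2*n - q ∨ m = 2*n + q)) ∨
    (∃ m, -k₁ ≤ m ∧ m ≤ k₂ ∧ m ≠ 0 ∧ (2*m = n ∨ 2*m = n - q ∨ 2*m = n + q)) := by
  rcases le_or_gt (2*n) k₂ with h1 | h1
  · rcases le_or_gt (-k₁) (2*n) with h2 | h2
    · exact Or.inl ⟨2*n, h2, h1, Or.inl rfl⟩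
    · rcases Int.even_or_odd n with he | ho
      · obtain ⟨t, ht⟩ := he
        exact Or.inr ⟨t, by omega, by omega, by omega, Or.inl (by omega)⟩
      · rcases le_or_gt (2*n + q) k₂ with h3 | h3
        · exact Or.inl ⟨2*n + q, by omega, h3, Or.inr (Or.inr rfl)⟩
        · have he : Even (n + q) := Odd.add_odd ho hqodd
          obtain ⟨t, ht⟩ := he
          exact Or.inr ⟨t, by omega, by omega, by omega, Or.inr (Or.inr (by omega))⟩
  · rcases Int.even_or_odd n with he | ho
    · obtain ⟨t, ht⟩ := he
      exact Or.inr ⟨t, by omega, by omega, by omega, Or.inl (by omega)⟩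
    · rcases le_or_gt (-k₁) (2*n - q) with h3 | h3
      · exact Or.inl ⟨2*n - q, h3, by omega, Or.inr (Or.inl rfl)⟩
      · have he : Even (n - q) := Odd.sub_odd ho hqodd
        obtain ⟨t, ht⟩ := he
        exact Or.inr ⟨t, by omega, by omega, by omega, Or.inr (Or.inl (by omega))⟩

/-- Explicit decomposition for symmetric long intervals: with
A = {x ∈ I \ {0} : 2x ∈ I \ {0}} and B = {1, 2}, one has I \ {0} = A·B and
|A| ≥ (k₁ + k₂)/2 ≥ 0.4(p-1). -/
theorem explicit_decomposition_long_interval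
    (p : ℕ) [Fact p.Prime] (hp : 3 ≤ p)
    (k₁ k₂ : ℤ)
    (hk₁ : (0.4 : ℚ) * ((p : ℚ) - 1) ≤ (k₁ : ℚ))
    (hk₂ : (0.4 : ℚ) * ((p : ℚ) - 1) ≤ (k₂ : ℚ))
    (hk : k₁ + k₂ < (p : ℤ) - 1)
    (I A B : Finset (ZMod p))
    (hI : I = (Finset.Icc (-k₁) k₂).image (fun n : ℤ => (n : ZMod p)))
    (hA : A = (I.erase 0).filter (fun x => 2 * x ∈ I.erase 0))
    (hB : B = ({1, 2} : Finset (ZMod p))) :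
    I.erase 0 = A * B ∧
      ((k₁ : ℚ) + (k₂ : ℚ)) / 2 ≤ (A.card : ℚ) ∧
      (0.4 : ℚ) * ((p : ℚ) - 1) ≤ ((k₁ : ℚ) + (k₂ : ℚ)) / 2 := by
  have hpp : p.Prime := Fact.out
  have hp3 : (3:ℤ) ≤ (p:ℤ) := by exact_mod_cast hp
  have hp3q : (3:ℚ) ≤ (p:ℚ) := by exact_mod_cast hp
  have hqodd : Odd (p:ℤ) := by
    exact_mod_cast hpp.odd_of_ne_two (by omega)
  have h5a : 2 * ((p:ℤ) - 1) ≤ 5 * k₁ := by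
    have h : 2 * ((p:ℚ) - 1) ≤ 5 * (k₁:ℚ) := by norm_num at hk₁; linarith
    exact_mod_cast h
  have h5b : 2 * ((p:ℤ) - 1) ≤ 5 * k₂ := by
    have h : 2 * ((p:ℚ) - 1) ≤ 5 * (k₂:ℚ) := by norm_num at hk₂; linarith
    exact_mod_cast h
  have hk₁1 : 1 ≤ k₁ := by omega
  have hk₂1 : 1 ≤ k₂ := by omega
  -- casts of elements of [-k₁, k₂] are nonzero unless the integer is zero
  have hcast_ne : ∀ m : ℤ, -k₁ ≤ m → m ≤ k₂ → m ≠ 0 → (m : ZMod p) ≠ 0 := by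
    intro m h1 h2 h0 hc
    rw [ZMod.intCast_zmod_eq_zero_iff_dvd] at hc
    obtain ⟨c, hc⟩ := hc
    have hc0 : c = 0 := by
      by_contra hcne
      rcases lt_trichotomy c 0 with h | h | h
      · nlinarith [mul_le_mul_of_nonneg_left (show c ≤ -1 by omega) (show (0:ℤ) ≤ p by omega)]
      · exact hcne h
      · nlinarith [mul_le_mul_of_nonneg_left (show 1 ≤ c by omega) (show (0:ℤ) ≤ p by omega)]
    rw [hc0, mul_zero] at hc
    omega
  have h2ne : (2 : ZMod p) ≠ 0 := by
    intro h
    have h2 : ((2:ℕ) : ZMod p) = 0 := by exact_mod_cast h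
    rw [ZMod.natCast_eq_zero_iff] at h2
    have := Nat.le_of_dvd (by norm_num) h2
    omega
  -- injectivity of the cast on the interval
  have hinj : Set.InjOn (fun n : ℤ => (n : ZMod p)) (Finset.Icc (-k₁) k₂) := by
    intro m hm n hn h
    simp only [Finset.coe_Icc, Set.mem_Icc] at hm hn
    have : ((m - n : ℤ) : ZMod p) = 0 := by push_cast; rw [sub_eq_zero]; exact h
    rw [ZMod.intCast_zmod_eq_zero_iff_dvd] at this
    obtain ⟨c, hc⟩ := this
    have hc0 : c = 0 := by
      by_contra hcne
      rcases lt_trichotomy c 0 with hh | hh | hh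
      · nlinarith [mul_le_mul_of_nonneg_left (show c ≤ -1 by omega) (show (0:ℤ) ≤ p by omega)]
      · exact hcne hh
      · nlinarith [mul_le_mul_of_nonneg_left (show 1 ≤ c by omega) (show (0:ℤ) ≤ p by omega)]
    rw [hc0, mul_zero] at hc
    omega
  have hpcast : ((p:ℤ) : ZMod p) = 0 := by
    simp
  -- first part: I.erase 0 = A * B
  have hmain : I.erase 0 = A * B := by
    apply Finset.Subset.antisymm
    · intro x hx
      have hx' := hx
      rw [Finset.mem_erase] at hx'
      obtain ⟨hx0, hxI⟩ := hx'
      rw [hI, Finset.mem_image] at hxI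
      obtain ⟨n, hnIcc, hnx⟩ := hxI
      rw [Finset.mem_Icc] at hnIcc
      rcases int_key (p:ℤ) k₁ k₂ n hp3 hqodd h5a h5b hk hnIcc.1 hnIcc.2 with
        ⟨m, hm1, hm2, hm3⟩ | ⟨m, hm1, hm2, hm0, hm3⟩
      · -- 2x ∈ I.erase 0, so x ∈ A and x = x * 1
        have hmx : (m : ZMod p) = 2 * x := by
          rcases hm3 with rfl | rfl | rfl
          · push_cast
            rw [hnx]
          · push_cast
            rw [ZMod.natCast_self, hnx]
            ring
          · push_cast
            rw [ZMod.natCast_self, hnx]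
            ring
        have h2xI : 2 * x ∈ I.erase 0 := by
          rw [Finset.mem_erase]
          refine ⟨mul_ne_zero h2ne hx0, ?_⟩
          rw [hI, Finset.mem_image]
          exact ⟨m, Finset.mem_Icc.2 ⟨hm1, hm2⟩, hmx⟩
        have hxA : x ∈ A := by
          rw [hA, Finset.mem_filter]; exact ⟨hx, h2xI⟩
        have h1B : (1 : ZMod p) ∈ B := by rw [hB]; simp
        have := Finset.mul_mem_mul hxA h1B
        simpa using this
      · -- x = (m) * 2 with m ∈ A
        have hax : 2 * (m : ZMod p) = x := by
          rcases hm3 with h | h | h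
          · rw [← hnx]; exact_mod_cast congrArg (fun z : ℤ => (z : ZMod p)) h
          · have : ((2 * m : ℤ) : ZMod p) = ((n - p : ℤ) : ZMod p) := by rw [h]
            push_cast at this
            rw [ZMod.natCast_self, hnx] at this
            rw [this]; ring
          · have : ((2 * m : ℤ) : ZMod p) = ((n + p : ℤ) : ZMod p) := by rw [h]
            push_cast at this
            rw [ZMod.natCast_self, hnx] at this
            rw [this]; ring
        have hmI : (m : ZMod p) ∈ I.erase 0 := by
          rw [Finset.mem_erase]
          refine ⟨hcast_ne m hm1 hm2 hm0, ?_⟩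
          rw [hI, Finset.mem_image]
          exact ⟨m, Finset.mem_Icc.2 ⟨hm1, hm2⟩, rfl⟩
        have hmA : (m : ZMod p) ∈ A := by
          rw [hA, Finset.mem_filter]
          exact ⟨hmI, by rw [hax]; exact hx⟩
        have h2B : (2 : ZMod p) ∈ B := by rw [hB]; simp
        have hmem := Finset.mul_mem_mul hmA h2B
        rw [show ((m : ZMod p) * 2) = x from by rw [mul_comm]; exact hax] at hmem
        exact hmem
    · intro x hx
      rw [Finset.mem_mul] at hx
      obtain ⟨a, ha, b, hb, rfl⟩ := hx
      rw [hA, Finset.mem_filter] at ha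
      rw [hB, Finset.mem_insert, Finset.mem_singleton] at hb
      rcases hb with rfl | rfl
      · simpa using ha.1
      · have := ha.2
        rwa [mul_comm] at this
  refine ⟨hmain, ?_, by norm_num; linarith⟩
  -- cardinality bound
  have hIcard : I.card = (k₁ + k₂ + 1).toNat := by
    rw [hI, Finset.card_image_of_injOn hinj, Int.card_Icc]
    congr 1
    ring
  have h0I : (0 : ZMod p) ∈ I := by
    rw [hI, Finset.mem_image]
    exact ⟨0, Finset.mem_Icc.2 ⟨by omega, by omega⟩, by simp⟩
  have hIe : (I.erase 0).card = (k₁ + k₂).toNat := by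
    rw [Finset.card_erase_of_mem h0I, hIcard]; omega
  have hBcard : B.card ≤ 2 := by
    rw [hB]
    exact (Finset.card_insert_le _ _).trans (by simp)
  have hABle : (A * B).card ≤ A.card * 2 :=
    (Finset.card_mul_le).trans (Nat.mul_le_mul_left _ hBcard)
  have hfin : (k₁ + k₂).toNat ≤ A.card * 2 := by
    rw [← hIe, hmain]; exact hABle
  have hfinQ : (k₁:ℚ) + (k₂:ℚ) ≤ (A.card : ℚ) * 2 := by
    have h1 : (((k₁ + k₂).toNat : ℤ) : ℚ) ≤ ((A.card : ℤ) : ℚ) * 2 := by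
      exact_mod_cast hfin
    rw [Int.toNat_of_nonneg (by omega)] at h1
    push_cast at h1 ⊢
    linarith
  linarith
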